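/- One round of the abstract fault-tolerant averaging iteration halves the pulse spread up to delay and drift errors: let n, f be natural numbers with n > 3f, let Q ⊆ Fin n have complement of cardinality at most f, let d ≥ 0, T ≥ 0 and ϑ ≥ 1. Suppose t : Q → ℝ are the current pulse instants of the nonfaulty nodes, and for each q ∈ Q there is an observation vector x_q : Fin n → ℝ with x_q p ∈ [t p, t p + d] for every p ∈ Q (values at indices outside Q arbitrary), and the next pulse instant of q is t' q = mid_f(x_q) + T_q for some T_q ∈ [T/ϑ, T]. Then (i) for all q, q' ∈ Q, |t' q − t' q'| ≤ (max_{p∈Q} t p − min_{p∈Q} t p)/2 + d + (1 − ϑ⁻¹)·T, and (ii) for all q ∈ Q, min_{p∈Q} t p + T/ϑ ≤ t' q ≤ max_{p∈Q} t p + d + T. (This is the abstract, model-free content of Lemma 3 of the paper: each simulated round of approximate agreement in the second stage of the absorption process produces next-pulse intervals I_{k+1} with |I_{k+1}| ≤ |I_k|/2 + d + ρϑ⁻¹T, contained in I_k + T + [−ϑ⁻¹ρT, d).) -/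

import Mathlib

open Finset

/-- The `k`-th smallest entry (1-indexed, counted with multiplicity) of `x : Fin n → ℝ`. -/
noncomputable def orderStat {n : ℕ} (x : Fin n → ℝ) (k : ℕ) : ℝ :=
  ((Multiset.map x (Finset.univ : Finset (Fin n)).val).sort (· ≤ ·)).getD (k - 1) 0

/-- The `k`-th smallest (1-indexed, with multiplicity) of the `|G|` values `x i`, `i ∈ G`. -/
noncomputable def orderStatOn {n : ℕ} (G : Finset (Fin n)) (x : Fin n → ℝ) (k : ℕ) : ℝ :=
  ((Multiset.map x G.val).sort (· ≤ ·)).getD (k - 1) 0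

/-- The fault-tolerant midpoint `mid_f(x) = (x_(f+1) + x_(n−f))/2`. -/
noncomputable def ftMid (n f : ℕ) (x : Fin n → ℝ) : ℝ :=
  (orderStat x (f + 1) + orderStat x (n - f)) / 2

/-- If the complement of `G` has at most `f` elements and `n > 3f`, then `G` is nonempty. -/
lemma nonempty_of_compl {n f : ℕ} (hn : 3 * f < n) {G : Finset (Fin n)}
    (hG : Gᶜ.card ≤ f) : G.Nonempty := by
  rw [← Finset.card_pos]
  have h := Finset.card_compl G
  simp only [Fintype.card_fin] at h
  omega


lemma sorted_getElem_le {l : List ℝ} (hs : l.Pairwise (· ≤ ·)) {k : ℕ} (hk : k < l.length)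
    {c : ℝ} (h : k + 1 ≤ l.countP (fun a => decide (a ≤ c))) : l[k] ≤ c := by
  by_contra hc
  push_neg at hc
  have hmono := List.pairwise_iff_getElem.mp hs
  have hdrop : (l.drop k).countP (fun a => decide (a ≤ c)) = 0 := by
    rw [List.countP_eq_zero]
    intro a ha
    obtain ⟨j, hj, rfl⟩ := List.mem_iff_getElem.mp ha
    have hj' : j < l.length - k := by simpa using hj
    have hjk : k + j < l.length := by omega
    rw [List.getElem_drop]
    simp only [decide_eq_true_eq, not_le]
    have hle : l[k] ≤ l[k+j] := by
      rcases Nat.eq_zero_or_pos j with rfl | hj0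
      · simp
      · exact hmono _ _ hk hjk (by omega)
    exact hc.trans_le hle
  have hsplit : l.countP (fun a => decide (a ≤ c)) ≤ k := by
    conv_lhs => rw [← List.take_append_drop k l, List.countP_append]
    rw [hdrop]
    have := List.countP_le_length (p := fun a => decide (a ≤ c)) (l := l.take k)
    simp [List.length_take] at this ⊢
    omega
  omega

lemma le_sorted_getElem {l : List ℝ} (hs : l.Pairwise (· ≤ ·)) {k : ℕ} (hk : k < l.length)
    {c : ℝ} (h : l.length - k ≤ l.countP (fun a => decide (c ≤ a))) : c ≤ l[k] := by
  by_contra hc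
  push_neg at hc
  have hmono := List.pairwise_iff_getElem.mp hs
  have htake : (l.take (k+1)).countP (fun a => decide (c ≤ a)) = 0 := by
    rw [List.countP_eq_zero]
    intro a ha
    obtain ⟨j, hj, rfl⟩ := List.mem_iff_getElem.mp ha
    have hj' : j < k + 1 := by simp [List.length_take] at hj; omega
    rw [List.getElem_take]
    simp only [decide_eq_true_eq, not_le]
    have hle : l[j] ≤ l[k] := by
      rcases Nat.lt_or_ge j k with hl | hg
      · exact hmono j k (by omega) hk hl
      · have : j = k := by omega
        subst this; exact le_rfl
    exact hle.trans_lt hc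
  have hsplit : l.countP (fun a => decide (c ≤ a)) ≤ l.length - (k+1) := by
    conv_lhs => rw [← List.take_append_drop (k+1) l, List.countP_append]
    rw [htake]
    have := List.countP_le_length (p := fun a => decide (c ≤ a)) (l := l.drop (k+1))
    simp [List.length_drop] at this ⊢
    omega
  omega

lemma sorted_count_le {l : List ℝ} (hs : l.Pairwise (· ≤ ·)) {k : ℕ} (hk : k < l.length) :
    k + 1 ≤ l.countP (fun a => decide (a ≤ l[k])) := by
  obtain ⟨c, hc⟩ : ∃ c, l[k] = c := ⟨_, rfl⟩
  rw [hc]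
  have hmono := List.pairwise_iff_getElem.mp hs
  have htake : (l.take (k+1)).countP (fun a => decide (a ≤ c)) = (l.take (k+1)).length := by
    rw [List.countP_eq_length]
    intro a ha
    obtain ⟨j, hj, rfl⟩ := List.mem_iff_getElem.mp ha
    have hj' : j < k + 1 := by simp [List.length_take] at hj; omega
    rw [List.getElem_take]
    simp only [decide_eq_true_eq]
    rw [← hc]
    rcases Nat.lt_or_ge j k with hl | hg
    · exact hmono j k (by omega) hk hl
    · have : j = k := by omega
      subst this; exact le_rfl
  have hlen : (l.take (k+1)).length = k + 1 := by simp [List.length_take]; omega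
  conv_rhs => rw [← List.take_append_drop (k+1) l, List.countP_append]
  omega

lemma sorted_count_ge {l : List ℝ} (hs : l.Pairwise (· ≤ ·)) {k : ℕ} (hk : k < l.length) :
    l.length - k ≤ l.countP (fun a => decide (l[k] ≤ a)) := by
  obtain ⟨c, hc⟩ : ∃ c, l[k] = c := ⟨_, rfl⟩
  rw [hc]
  have hmono := List.pairwise_iff_getElem.mp hs
  have hdrop : (l.drop k).countP (fun a => decide (c ≤ a)) = (l.drop k).length := by
    rw [List.countP_eq_length]
    intro a ha
    obtain ⟨j, hj, rfl⟩ := List.mem_iff_getElem.mp ha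
    have hj' : j < l.length - k := by simpa using hj
    rw [List.getElem_drop]
    simp only [decide_eq_true_eq]
    rw [← hc]
    rcases Nat.eq_zero_or_pos j with rfl | hj0
    · simp
    · exact hmono _ _ hk (by omega) (by omega)
  have hlen : (l.drop k).length = l.length - k := by simp [List.length_drop]
  conv_rhs => rw [← List.take_append_drop k l, List.countP_append]
  omega

lemma countP_sortMap {n : ℕ} (G : Finset (Fin n)) (x : Fin n → ℝ) (P : ℝ → Prop) [DecidablePred P] :
    ((Multiset.map x G.val).sort (· ≤ ·)).countP (fun a => decide (P a))
      = (G.filter (fun i => P (x i))).card := by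
  rw [← Multiset.coe_countP, Multiset.sort_eq, Multiset.countP_map]
  rfl

lemma length_sortMap {n : ℕ} (G : Finset (Fin n)) (x : Fin n → ℝ) :
    ((Multiset.map x G.val).sort (· ≤ ·)).length = G.card := by
  rw [Multiset.length_sort, Multiset.card_map]; rfl

lemma orderStatOn_getElem {n : ℕ} (G : Finset (Fin n)) (x : Fin n → ℝ) {k : ℕ}
    (hk1 : 1 ≤ k) (hk2 : k ≤ G.card) :
    orderStatOn G x k = ((Multiset.map x G.val).sort (· ≤ ·))[k-1]'(by rw [length_sortMap]; omega) := by
  rw [orderStatOn, List.getD_eq_getElem]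

lemma orderStatOn_le {n : ℕ} {G : Finset (Fin n)} {x : Fin n → ℝ} {k : ℕ}
    (hk1 : 1 ≤ k) (hk2 : k ≤ G.card)
    {c : ℝ} (h : k ≤ (G.filter (fun i => x i ≤ c)).card) : orderStatOn G x k ≤ c := by
  rw [orderStatOn_getElem G x hk1 hk2]
  apply sorted_getElem_le (Multiset.pairwise_sort _ _)
  rw [countP_sortMap]
  omega

lemma le_orderStatOn {n : ℕ} {G : Finset (Fin n)} {x : Fin n → ℝ} {k : ℕ}
    (hk1 : 1 ≤ k) (hk2 : k ≤ G.card)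
    {c : ℝ} (h : G.card - (k - 1) ≤ (G.filter (fun i => c ≤ x i)).card) : c ≤ orderStatOn G x k := by
  rw [orderStatOn_getElem G x hk1 hk2]
  apply le_sorted_getElem (Multiset.pairwise_sort _ _)
  rw [countP_sortMap, length_sortMap]
  omega

lemma orderStatOn_count_le {n : ℕ} {G : Finset (Fin n)} {x : Fin n → ℝ} {k : ℕ}
    (hk1 : 1 ≤ k) (hk2 : k ≤ G.card) :
    k ≤ (G.filter (fun i => x i ≤ orderStatOn G x k)).card := by
  have := sorted_count_le (Multiset.pairwise_sort (α := ℝ) (Multiset.map x G.val) (· ≤ ·))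
    (k := k - 1) (by rw [length_sortMap]; omega)
  rw [← orderStatOn_getElem G x hk1 hk2, countP_sortMap] at this
  omega

lemma orderStatOn_count_ge {n : ℕ} {G : Finset (Fin n)} {x : Fin n → ℝ} {k : ℕ}
    (hk1 : 1 ≤ k) (hk2 : k ≤ G.card) :
    G.card - (k - 1) ≤ (G.filter (fun i => orderStatOn G x k ≤ x i)).card := by
  have := sorted_count_ge (Multiset.pairwise_sort (α := ℝ) (Multiset.map x G.val) (· ≤ ·))
    (k := k - 1) (by rw [length_sortMap]; omega)
  rw [← orderStatOn_getElem G x hk1 hk2, countP_sortMap, length_sortMap] at this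
  omega

lemma orderStatOn_mem {n : ℕ} {G : Finset (Fin n)} {x : Fin n → ℝ} {k : ℕ}
    (hk1 : 1 ≤ k) (hk2 : k ≤ G.card) : ∃ p ∈ G, orderStatOn G x k = x p := by
  rw [orderStatOn_getElem G x hk1 hk2]
  have hm : ((Multiset.map x G.val).sort (· ≤ ·))[k-1]'(by rw [length_sortMap]; omega)
      ∈ (Multiset.map x G.val).sort (· ≤ ·) := List.getElem_mem _
  rw [Multiset.mem_sort] at hm
  obtain ⟨p, hp, he⟩ := Multiset.mem_map.mp hm
  exact ⟨p, hp, he.symm⟩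

lemma orderStatOn_mono {n : ℕ} {G : Finset (Fin n)} {x : Fin n → ℝ} {k k' : ℕ}
    (hk1 : 1 ≤ k) (hkk : k ≤ k') (hk2 : k' ≤ G.card) :
    orderStatOn G x k ≤ orderStatOn G x k' := by
  rw [orderStatOn_getElem G x hk1 (hkk.trans hk2), orderStatOn_getElem G x (hk1.trans hkk) hk2]
  rcases Nat.eq_or_lt_of_le hkk with rfl | hlt
  · exact le_rfl
  · exact List.pairwise_iff_getElem.mp (Multiset.pairwise_sort _ _) _ _ _ _ (by omega)

lemma orderStat_eq_on {n : ℕ} (x : Fin n → ℝ) (k : ℕ) :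
    orderStat x k = orderStatOn Finset.univ x k := rfl

lemma card_compl_bound {n f : ℕ} (hn : 3 * f < n) {Q : Finset (Fin n)} (hQ : Qᶜ.card ≤ f) :
    n - f ≤ Q.card ∧ Q.card ≤ n := by
  have h := Finset.card_compl Q
  simp only [Fintype.card_fin] at h
  have := Finset.card_le_card (Finset.subset_univ Q)
  simp only [Finset.card_univ, Fintype.card_fin] at this
  omega

lemma ftMid_sandwich {n f : ℕ} (hn : 3 * f < n) {Q : Finset (Fin n)} (hQ : Qᶜ.card ≤ f)
    {d : ℝ} (hd : 0 ≤ d) {t x : Fin n → ℝ}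
    (hx : ∀ p ∈ Q, x p ∈ Set.Icc (t p) (t p + d)) :
    (Q.inf' (nonempty_of_compl hn hQ) t + orderStatOn Q t (Q.card - f)) / 2 ≤ ftMid n f x ∧
      ftMid n f x ≤ (orderStatOn Q t (f + 1) + Q.sup' (nonempty_of_compl hn hQ) t) / 2 + d := by
  obtain ⟨hQ1, hQ2⟩ := card_compl_bound hn hQ
  set m := Q.inf' (nonempty_of_compl hn hQ) t with hm
  set M := Q.sup' (nonempty_of_compl hn hQ) t with hM
  set u := orderStatOn Q t (f + 1) with hu
  set v := orderStatOn Q t (Q.card - f) with hv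
  have hcu : (Finset.univ : Finset (Fin n)).card = n := by simp
  have hmt : ∀ p ∈ Q, m ≤ t p := fun p hp => Finset.inf'_le _ hp
  have htM : ∀ p ∈ Q, t p ≤ M := fun p hp => Finset.le_sup' _ hp
  -- A1 : m ≤ orderStat x (f+1)
  have A1 : m ≤ orderStat x (f + 1) := by
    rw [orderStat_eq_on]
    apply le_orderStatOn (by omega) (by omega)
    have hsub : Q ⊆ Finset.univ.filter (fun i => m ≤ x i) := by
      intro p hp
      simp only [Finset.mem_filter, Finset.mem_univ, true_and]
      exact (hmt p hp).trans (hx p hp).1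
    exact le_trans (by rw [hcu]; omega) (Finset.card_le_card hsub)
  -- A2 : orderStat x (f+1) ≤ u + d
  have A2 : orderStat x (f + 1) ≤ u + d := by
    rw [orderStat_eq_on]
    apply orderStatOn_le (by omega) (by rw [hcu]; omega)
    have hcount := orderStatOn_count_le (G := Q) (x := t) (k := f + 1) (by omega) (by omega)
    have hsub : Q.filter (fun i => t i ≤ u) ⊆ Finset.univ.filter (fun i => x i ≤ u + d) := by
      intro p hp
      simp only [Finset.mem_filter, Finset.mem_univ, true_and] at hp ⊢
      calc x p ≤ t p + d := (hx p hp.1).2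
        _ ≤ u + d := by linarith [hp.2]
    exact le_trans (by omega) (le_trans hcount (Finset.card_le_card hsub))
  -- B1 : v ≤ orderStat x (n-f)
  have B1 : v ≤ orderStat x (n - f) := by
    rw [orderStat_eq_on]
    apply le_orderStatOn (by omega) (by rw [hcu]; omega)
    have hcount := orderStatOn_count_ge (G := Q) (x := t) (k := Q.card - f) (by omega) (by omega)
    have hsub : Q.filter (fun i => v ≤ t i) ⊆ Finset.univ.filter (fun i => v ≤ x i) := by
      intro p hp
      simp only [Finset.mem_filter, Finset.mem_univ, true_and] at hp ⊢
      exact hp.2.trans (hx p hp.1).1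
    exact le_trans (by rw [hcu]; omega) (le_trans hcount (Finset.card_le_card hsub))
  -- B2 : orderStat x (n-f) ≤ M + d
  have B2 : orderStat x (n - f) ≤ M + d := by
    rw [orderStat_eq_on]
    apply orderStatOn_le (by omega) (by rw [hcu]; omega)
    have hsub : Q ⊆ Finset.univ.filter (fun i => x i ≤ M + d) := by
      intro p hp
      simp only [Finset.mem_filter, Finset.mem_univ, true_and]
      calc x p ≤ t p + d := (hx p hp).2
        _ ≤ M + d := by linarith [htM p hp]
    exact le_trans (by omega) (Finset.card_le_card hsub)
  constructor
  · rw [ftMid]; linarith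
  · rw [ftMid]; linarith


/-- One round of the abstract fault-tolerant averaging iteration halves the pulse
spread up to delay and drift errors, and keeps the next pulses within the advanced
envelope of the current ones. -/
theorem stmt_8 (n f : ℕ) (hn : 3 * f < n) (Q : Finset (Fin n)) (hQ : Qᶜ.card ≤ f)
    (d T ϑ : ℝ) (hd : 0 ≤ d) (hT : 0 ≤ T) (hϑ : 1 ≤ ϑ)
    (t t' : Fin n → ℝ)
    (hstep : ∀ q ∈ Q, ∃ x : Fin n → ℝ,
      (∀ p ∈ Q, x p ∈ Set.Icc (t p) (t p + d)) ∧
        ∃ Tq ∈ Set.Icc (T / ϑ) T, t' q = ftMid n f x + Tq) :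
    (∀ q ∈ Q, ∀ q' ∈ Q,
        |t' q - t' q'| ≤
          (Q.sup' (nonempty_of_compl hn hQ) t - Q.inf' (nonempty_of_compl hn hQ) t) / 2
            + d + (1 - ϑ⁻¹) * T) ∧
      (∀ q ∈ Q,
        Q.inf' (nonempty_of_compl hn hQ) t + T / ϑ ≤ t' q ∧
          t' q ≤ Q.sup' (nonempty_of_compl hn hQ) t + d + T) := by
  obtain ⟨hQ1, hQ2⟩ := card_compl_bound hn hQ
  set m := Q.inf' (nonempty_of_compl hn hQ) t with hm
  set M := Q.sup' (nonempty_of_compl hn hQ) t with hM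
  set u := orderStatOn Q t (f + 1) with hu
  set v := orderStatOn Q t (Q.card - f) with hv
  have huv : u ≤ v := orderStatOn_mono (by omega) (by omega) (by omega)
  have hmu : m ≤ u ∧ u ≤ M := by
    obtain ⟨p, hp, he⟩ := orderStatOn_mem (G := Q) (x := t) (k := f + 1) (by omega) (by omega)
    rw [hu, he]
    exact ⟨Finset.inf'_le _ hp, Finset.le_sup' _ hp⟩
  have hmv : m ≤ v ∧ v ≤ M := by
    obtain ⟨p, hp, he⟩ := orderStatOn_mem (G := Q) (x := t) (k := Q.card - f) (by omega) (by omega)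
    rw [hv, he]
    exact ⟨Finset.inf'_le _ hp, Finset.le_sup' _ hp⟩
  have hdiv : T / ϑ = ϑ⁻¹ * T := by rw [div_eq_mul_inv]; ring
  have key : ∀ q ∈ Q, (m + v) / 2 + T / ϑ ≤ t' q ∧ t' q ≤ (u + M) / 2 + d + T := by
    intro q hq
    obtain ⟨x, hx, Tq, hTq, hte⟩ := hstep q hq
    obtain ⟨hlo, hhi⟩ := ftMid_sandwich hn hQ hd hx
    rw [hte]
    exact ⟨by linarith [hTq.1], by linarith [hTq.2]⟩
  constructor
  · intro q hq q' hq'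
    obtain ⟨h1, h2⟩ := key q hq
    obtain ⟨h1', h2'⟩ := key q' hq'
    rw [abs_sub_le_iff]
    have hTT : 0 ≤ T - T / ϑ := by
      linarith [div_le_self hT hϑ]
    constructor <;> · rw [hdiv] at *; linarith
  · intro q hq
    obtain ⟨h1, h2⟩ := key q hq
    exact ⟨by linarith [hmv.1], by linarith [hmu.2]⟩
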